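/- For coprime positive integers u, v, in the set {1,...,2u+2v} the equivalence relation generated by the three reflections x ~ 2u+1-x (for 1 ≤ x ≤ 2u), x ~ 4u+2v+1-x (for 2u+1 ≤ x ≤ 2u+2v), and x ~ 2u+2v+1-x (for 1 ≤ x ≤ 2u+2v) relates 1 to every other element of {1,...,2u+2v}. -/

import Mathlib

/-- The three-reflection relation on `{1,…,2u+2v}`. -/
def Rel7 (u v : ℕ) (x y : Set.Icc 1 (2 * u + 2 * v)) : Prop :=
  (1 ≤ x.1 ∧ x.1 ≤ 2 * u ∧ y.1 = 2 * u + 1 - x.1) ∨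
  (2 * u + 1 ≤ x.1 ∧ x.1 ≤ 2 * u + 2 * v ∧ y.1 = 4 * u + 2 * v + 1 - x.1) ∨
  (1 ≤ x.1 ∧ x.1 ≤ 2 * u + 2 * v ∧ y.1 = 2 * u + 2 * v + 1 - x.1)

section aux

variable (u v : ℕ) (hu : 0 < u) (hv : 0 < v)

/-- third reflection -/
lemma rel7_C (x y : Set.Icc 1 (2 * u + 2 * v))
    (h : y.1 = 2 * u + 2 * v + 1 - x.1) :
    Relation.EqvGen (Rel7 u v) x y := by
  refine Relation.EqvGen.rel _ _ ?_
  exact Or.inr (Or.inr ⟨x.2.1, x.2.2, h⟩)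

/-- step by +2v -/
lemma rel7_A (x y : Set.Icc 1 (2 * u + 2 * v))
    (hx : x.1 ≤ 2 * u) (h : y.1 = x.1 + 2 * v) :
    Relation.EqvGen (Rel7 u v) x y := by
  have hx1 : 1 ≤ x.1 := x.2.1
  have hz : 2 * u + 1 - x.1 ∈ Set.Icc 1 (2 * u + 2 * v) := ⟨by omega, by omega⟩
  refine Relation.EqvGen.trans _ ⟨2 * u + 1 - x.1, hz⟩ _
    (Relation.EqvGen.rel _ _ (Or.inl ⟨hx1, hx, rfl⟩)) ?_
  exact rel7_C u v _ _ (by simp only [h]; omega)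

/-- step by -2u -/
lemma rel7_B (x y : Set.Icc 1 (2 * u + 2 * v))
    (hx : 2 * u + 1 ≤ x.1) (h : y.1 + 2 * u = x.1) :
    Relation.EqvGen (Rel7 u v) x y := by
  have hx2 : x.1 ≤ 2 * u + 2 * v := x.2.2
  have hz : 4 * u + 2 * v + 1 - x.1 ∈ Set.Icc 1 (2 * u + 2 * v) := ⟨by omega, by omega⟩
  refine Relation.EqvGen.trans _ ⟨4 * u + 2 * v + 1 - x.1, hz⟩ _
    (Relation.EqvGen.rel _ _ (Or.inr (Or.inl ⟨hx, hx2, rfl⟩))) ?_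
  exact rel7_C u v _ _ (by simp only [h]; omega)

end aux

lemma rel7_key (u v : ℕ) (hu : 0 < u) (hv : 0 < v) :
    ∀ k : ℕ, ∀ x : Set.Icc 1 (2 * u + 2 * v), x.1 = (2 * k * v) % (2 * u + 2 * v) + 1 →
      Relation.EqvGen (Rel7 u v) ⟨1, Set.mem_Icc.mpr ⟨le_refl 1, by linarith⟩⟩ x := by
  have hN0 : 0 < 2 * u + 2 * v := by omega
  intro k
  induction k with
  | zero =>
    intro x hx
    simp only [Nat.mul_zero, Nat.zero_mul, Nat.zero_mod] at hx
    have : x = ⟨1, Set.mem_Icc.mpr ⟨le_refl 1, by omega⟩⟩ := by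
      apply Subtype.ext; show x.1 = 1; omega
    rw [this]
    exact Relation.EqvGen.refl _
  | succ k ih =>
    intro x hx
    have hmN : (2 * k * v) % (2 * u + 2 * v) < 2 * u + 2 * v := Nat.mod_lt _ hN0
    set m := (2 * k * v) % (2 * u + 2 * v) with hm
    have hp : m + 1 ∈ Set.Icc 1 (2 * u + 2 * v) := ⟨by omega, by omega⟩
    have hprev := ih ⟨m + 1, hp⟩ rfl
    have hmod : (2 * (k + 1) * v) % (2 * u + 2 * v) = (m + 2 * v) % (2 * u + 2 * v) := by
      have h1 : 2 * (k + 1) * v = 2 * k * v + 2 * v := by ring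
      rw [h1, Nat.add_mod, ← hm, Nat.mod_eq_of_lt (show 2 * v < 2 * u + 2 * v by omega)]
    refine Relation.EqvGen.trans _ _ _ hprev ?_
    by_cases hc : m + 2 * v < 2 * u + 2 * v
    · have hmm : (m + 2 * v) % (2 * u + 2 * v) = m + 2 * v := Nat.mod_eq_of_lt hc
      refine rel7_A u v _ x (show ((⟨m + 1, hp⟩ : Set.Icc 1 (2 * u + 2 * v)) : ℕ) ≤ 2 * u by
        show m + 1 ≤ 2 * u; omega) ?_
      show x.1 = (m + 1) + 2 * v
      rw [hx, hmod, hmm]; omega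
    · have h2 : (m + 2 * v) % (2 * u + 2 * v) = m + 2 * v - (2 * u + 2 * v) := by
        rw [Nat.mod_eq_sub_mod (by omega), Nat.mod_eq_of_lt (by omega)]
      refine rel7_B u v _ x (show 2 * u + 1 ≤ ((⟨m + 1, hp⟩ : Set.Icc 1 (2 * u + 2 * v)) : ℕ) by
        show 2 * u + 1 ≤ m + 1; omega) ?_
      show x.1 + 2 * u = m + 1
      rw [hx, hmod, h2]; omega

lemma rel7_exists_k (u v : ℕ) (hu : 0 < u) (hv : 0 < v) (hcop : Nat.gcd u v = 1)
    (m : ℕ) (hm : m < u + v) : ∃ k : ℕ, (k * v) % (u + v) = m := by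
  have hcop2 : Nat.Coprime v (u + v) :=
    Nat.coprime_add_self_right.mpr (Nat.coprime_comm.mp hcop)
  haveI : NeZero (u + v) := ⟨by omega⟩
  set n := u + v
  let zv : (ZMod n)ˣ := ZMod.unitOfCoprime v hcop2
  refine ⟨(((m : ZMod n) * (zv⁻¹ : (ZMod n)ˣ)).val), ?_⟩
  have hval : ∀ a : ℕ, a % n = ((a : ZMod n)).val := fun a => (ZMod.val_natCast n a).symm
  rw [hval]
  have : ((((m : ZMod n) * (zv⁻¹ : (ZMod n)ˣ)).val * v : ℕ) : ZMod n) = (m : ZMod n) := by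
    push_cast
    rw [ZMod.natCast_val, ZMod.cast_id]
    have hzv : ((zv : (ZMod n)ˣ) : ZMod n) = (v : ZMod n) := ZMod.coe_unitOfCoprime v hcop2
    rw [← hzv, mul_assoc, Units.inv_mul, mul_one]
  rw [this, ZMod.val_natCast, Nat.mod_eq_of_lt hm]

lemma rel7_odd (u v : ℕ) (hu : 0 < u) (hv : 0 < v) (hcop : Nat.gcd u v = 1)
    (x : Set.Icc 1 (2 * u + 2 * v)) (hodd : Odd x.1) :
    Relation.EqvGen (Rel7 u v) ⟨1, Set.mem_Icc.mpr ⟨le_refl 1, by linarith⟩⟩ x := by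
  obtain ⟨m, hm⟩ := hodd
  have hx1 : 1 ≤ x.1 := x.2.1
  have hx2 : x.1 ≤ 2 * u + 2 * v := x.2.2
  have hmlt : m < u + v := by omega
  obtain ⟨k, hk⟩ := rel7_exists_k u v hu hv hcop m hmlt
  apply rel7_key u v hu hv k
  have h2 : (2 * k * v) % (2 * u + 2 * v) = 2 * ((k * v) % (u + v)) := by
    have : 2 * k * v = 2 * (k * v) := by ring
    rw [this, show 2 * u + 2 * v = 2 * (u + v) by ring, Nat.mul_mod_mul_left]
  rw [h2, hk]; omega

theorem stmt7 (u v : ℕ) (hu : 0 < u) (hv : 0 < v) (hcop : Nat.gcd u v = 1) :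
    ∀ x : Set.Icc 1 (2 * u + 2 * v),
      Relation.EqvGen (fun x y : Set.Icc 1 (2 * u + 2 * v) =>
        (1 ≤ x.1 ∧ x.1 ≤ 2 * u ∧ y.1 = 2 * u + 1 - x.1) ∨
        (2 * u + 1 ≤ x.1 ∧ x.1 ≤ 2 * u + 2 * v ∧ y.1 = 4 * u + 2 * v + 1 - x.1) ∨
        (1 ≤ x.1 ∧ x.1 ≤ 2 * u + 2 * v ∧ y.1 = 2 * u + 2 * v + 1 - x.1))
        ⟨1, Set.mem_Icc.mpr ⟨le_refl 1, by omega⟩⟩ x := by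
  intro x
  show Relation.EqvGen (Rel7 u v) _ x
  have hx1 : 1 ≤ x.1 := x.2.1
  have hx2 : x.1 ≤ 2 * u + 2 * v := x.2.2
  rcases Nat.even_or_odd x.1 with he | ho
  · -- even: go via N+1-x
    obtain ⟨m, hm⟩ := he
    have hs : 2 * u + 2 * v + 1 - x.1 ∈ Set.Icc 1 (2 * u + 2 * v) := ⟨by omega, by omega⟩
    have hsodd : Odd ((⟨2 * u + 2 * v + 1 - x.1, hs⟩ : Set.Icc 1 (2 * u + 2 * v)) : ℕ) := by
      simp only; exact ⟨u + v - m, by omega⟩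
    refine Relation.EqvGen.trans _ _ _ (rel7_odd u v hu hv hcop _ hsodd) ?_
    exact rel7_C u v _ _ (by simp only; omega)
  · exact rel7_odd u v hu hv hcop x ho
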